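/- arXiv:2406.15840 — 3 statements merged into one kernel-verified Lean document; each statement's English description precedes it below -/
import Mathlib

section
/- Let β > 0 and λ_{n+1} = λ_n - β λ_n² with λ_0 ∈ (0, 1/β). Then λ_0/(1 + (β λ_0/(1 - β λ_0)) n) ≤ λ_n ≤ λ_0/(1 + β λ_0 n) for all n. -/
theorem stmt_2 (β : ℝ) (hβ : 0 < β) (l : ℕ → ℝ)
    (h0 : l 0 ∈ Set.Ioo 0 (1/β))
    (hrec : ∀ n, l (n+1) = l n - β * (l n)^2) :
    ∀ n : ℕ, l 0 / (1 + (β * l 0 / (1 - β * l 0)) * n) ≤ l n ∧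
      l n ≤ l 0 / (1 + β * l 0 * n) := by
  obtain ⟨ha0, ha1⟩ := h0
  have hc : 0 < 1 - β * l 0 := by
    have := (lt_div_iff₀ hβ).mp ha1
    nlinarith
  have key : ∀ n : ℕ, (0 < l n ∧ l n ≤ l 0) ∧
      1 / l 0 + β * n ≤ 1 / l n ∧
      1 / l n ≤ 1 / l 0 + β / (1 - β * l 0) * n := by
    intro n
    induction n with
    | zero => simp [ha0, le_refl]
    | succ n ih =>
      obtain ⟨⟨hp, hle⟩, h1, h2⟩ := ih
      have hcn : 0 < 1 - β * l n := by nlinarith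
      have hp' : 0 < l (n + 1) := by
        rw [hrec n]; nlinarith
      have hle' : l (n + 1) ≤ l 0 := by
        rw [hrec n]; nlinarith
      have hinv : 1 / l (n + 1) = 1 / l n + β / (1 - β * l n) := by
        rw [hrec n]
        have h1 : l n - β * l n ^ 2 = l n * (1 - β * l n) := by ring
        rw [h1]
        field_simp
        have hne : (1 - l n * β) ≠ 0 := by rw [mul_comm]; exact hcn.ne'
        rw [one_add_div hne]; ring
      have hb1 : β ≤ β / (1 - β * l n) := by
        rw [le_div_iff₀ hcn]
        nlinarith [mul_nonneg hβ.le (mul_nonneg hβ.le hp.le)]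
      have hb2 : β / (1 - β * l n) ≤ β / (1 - β * l 0) := by
        rw [div_le_div_iff₀ hcn hc]
        nlinarith [mul_nonneg (mul_nonneg hβ.le hβ.le) (sub_nonneg.mpr hle)]
      refine ⟨⟨hp', hle'⟩, ?_, ?_⟩
      · push_cast
        rw [hinv]
        linarith
      · push_cast
        rw [hinv]
        linarith
  intro n
  obtain ⟨⟨hp, hle⟩, h1, h2⟩ := key n
  have hn0 : (0:ℝ) ≤ n := Nat.cast_nonneg n
  have hd1 : 0 < 1 + β * l 0 * n := by positivity
  have hd2 : 0 < 1 + β * l 0 / (1 - β * l 0) * n := by positivity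
  have e1 : l n * l 0 * (1 / l 0) = l n := by field_simp
  have e2 : l n * l 0 * (1 / l n) = l 0 := by field_simp
  have e3 : (1 - β * l 0) * (β / (1 - β * l 0)) = β := by field_simp
  have e4 : (1 - β * l 0) * (β * l 0 / (1 - β * l 0)) = β * l 0 := by field_simp
  constructor
  · rw [div_le_iff₀ hd2, ← mul_le_mul_iff_right₀ hc]
    have E1 : l n * l 0 * (1 - β * l 0) * (1 / l n) = l 0 * (1 - β * l 0) := by
      field_simp [hp.ne']
    have E2 : l n * l 0 * (1 - β * l 0) * (1 / l 0 + β / (1 - β * l 0) * n)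
        = l n * (1 - β * l 0) + l n * l 0 * β * n := by
      field_simp
      have hne : (1 - l 0 * β) ≠ 0 := by rw [mul_comm]; exact hc.ne'
      linear_combination (l 0 * β * n) * (mul_inv_cancel₀ hne)
    have E3 : (1 - β * l 0) * (l n * (1 + β * l 0 / (1 - β * l 0) * n))
        = l n * (1 - β * l 0) + l n * l 0 * β * n := by
      field_simp
    have m2 := mul_le_mul_of_nonneg_left h2 (by positivity : (0:ℝ) ≤ l n * l 0 * (1 - β * l 0))
    rw [E3]
    linarith [m2, E1, E2]
  · rw [le_div_iff₀ hd1]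
    have m1 := mul_le_mul_of_nonneg_left h1 (by positivity : (0:ℝ) ≤ l n * l 0)
    nlinarith
end

section
/- Let β > 0 and λ_{n+1} = λ_n - β λ_n² with λ_0 ∈ (0, 1/β). Then the series Σ_{k=0}^∞ λ_k² converges, with Σ_{k=0}^{n-1} λ_k² ≤ λ_0(λ_0 + 1/β) for all n. -/
theorem stmt_6 (β : ℝ) (hβ : 0 < β) (l : ℕ → ℝ)
    (h0 : l 0 ∈ Set.Ioo 0 (1/β))
    (hrec : ∀ n, l (n+1) = l n - β * (l n)^2) :
    Summable (fun k => (l k)^2) ∧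
      ∀ n : ℕ, ∑ k ∈ Finset.range n, (l k)^2 ≤ l 0 * (l 0 + 1/β) := by
  obtain ⟨h0p, h0u⟩ := h0
  have hpos : ∀ n, 0 < l n ∧ l n < 1/β := by
    intro n
    induction n with
    | zero => exact ⟨h0p, h0u⟩
    | succ n ih =>
      obtain ⟨hp, hu⟩ := ih
      have h1 : 0 < 1 - β * l n := by
        have : β * l n < β * (1/β) := by exact (mul_lt_mul_iff_right₀ hβ).2 hu
        rw [mul_one_div, div_self hβ.ne'] at this
        linarith
      have heq : l (n+1) = l n * (1 - β * l n) := by rw [hrec n]; ring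
      constructor
      · rw [heq]; positivity
      · have : l (n+1) ≤ l n := by rw [hrec n]; nlinarith [sq_nonneg (l n)]
        linarith
  have htel : ∀ n, β * ∑ k ∈ Finset.range n, (l k)^2 = l 0 - l n := by
    intro n
    induction n with
    | zero => simp
    | succ n ih =>
      rw [Finset.sum_range_succ, mul_add, ih, hrec n]; ring
  have hbound : ∀ n, ∑ k ∈ Finset.range n, (l k)^2 ≤ l 0 / β := by
    intro n
    have := htel n
    have hn := (hpos n).1
    rw [le_div_iff₀ hβ]
    nlinarith [htel n]
  have hfinal : ∀ n, ∑ k ∈ Finset.range n, (l k)^2 ≤ l 0 * (l 0 + 1/β) := by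
    intro n
    have := hbound n
    have : l 0 / β ≤ l 0 * (l 0 + 1/β) := by
      rw [mul_add, mul_one_div]
      nlinarith
    linarith [hbound n]
  refine ⟨?_, hfinal⟩
  apply summable_of_sum_range_le (c := l 0 * (l 0 + 1/β))
  · intro k; positivity
  · exact hfinal
end

section
/- Let β > 0, β_3 < 0, and λ solve λ'(t) = -β λ² - β_3 λ³ with λ_0 ∈ (0, -β/β_3). Then λ(t) is positive and monotone decreasing, λ(t) ≤ 1/(1/λ_0 + (β - |β_3| λ_0) t), and t λ(t) → 1/β as t → ∞. -/
open Set Filter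

/-- Invariance of the interval `(0, -β/β₃)` for the cubic ODE. -/
lemma stmt18_mem (β β₃ : ℝ) (hβ : 0 < β) (hβ₃ : β₃ < 0) (l : ℝ → ℝ) (l₀ : ℝ)
    (hl₀ : l₀ ∈ Set.Ioo 0 (-β/β₃)) (hinit : l 0 = l₀)
    (hderiv : ∀ t : ℝ, 0 ≤ t → HasDerivAt l (-β * (l t)^2 - β₃ * (l t)^3) t) :
    ∀ t : ℝ, 0 ≤ t → l t ∈ Set.Ioo 0 (-β/β₃) := by
  obtain ⟨hl₀pos, hl₀lt⟩ := hl₀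
  set a : ℝ := -β/β₃ with ha_def
  have ha : 0 < a := by
    rw [ha_def, div_pos_iff]
    right; constructor <;> linarith
  have h3ne : β₃ ≠ 0 := ne_of_lt hβ₃
  have hβ₃a : β₃ * a = -β := by
    rw [ha_def]; field_simp
  have h0 : l 0 ∈ Ioo 0 a := by rw [hinit]; exact ⟨hl₀pos, hl₀lt⟩
  intro t₁ ht₁
  by_contra hnmem
  have ht₁0 : 0 < t₁ := by
    rcases eq_or_lt_of_le ht₁ with h | h
    · exact absurd (h ▸ h0) hnmem
    · exact h
  have hcontOn : ∀ u : ℝ, 0 ≤ u → ContinuousOn l (Icc 0 u) := fun u hu s hs =>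
    ((hderiv s hs.1).continuousAt).continuousWithinAt
  -- find a time where l hits an equilibrium 0 or a
  obtain ⟨c, hc, t₂, ht₂mem, ht₂⟩ :
      ∃ c, (c = 0 ∨ c = a) ∧ ∃ t₂ ∈ Icc 0 t₁, l t₂ = c := by
    rw [mem_Ioo, not_and_or] at hnmem
    rcases hnmem with h | h
    · push_neg at h
      have : (0:ℝ) ∈ Icc (l t₁) (l 0) := ⟨h, le_of_lt h0.1⟩
      obtain ⟨t₂, ht₂mem, ht₂⟩ := intermediate_value_Icc' ht₁ (hcontOn t₁ ht₁) this
      exact ⟨0, Or.inl rfl, t₂, ht₂mem, ht₂⟩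
    · push_neg at h
      have : a ∈ Icc (l 0) (l t₁) := ⟨le_of_lt h0.2, h⟩
      obtain ⟨t₂, ht₂mem, ht₂⟩ := intermediate_value_Icc ht₁ (hcontOn t₁ ht₁) this
      exact ⟨a, Or.inr rfl, t₂, ht₂mem, ht₂⟩
  have hcne : l 0 ≠ c := by
    rcases hc with rfl | rfl
    · exact ne_of_gt h0.1
    · exact ne_of_lt h0.2
  -- equilibrium property
  have hceq : -β * c^2 - β₃ * c^3 = 0 := by
    rcases hc with rfl | rfl
    · ring
    · have : β + β₃ * a = 0 := by rw [hβ₃a]; ring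
      nlinarith [this]
  -- bound the values of l on [0, t₂]
  have ht₂0 : 0 ≤ t₂ := ht₂mem.1
  obtain ⟨M, hM⟩ := (isCompact_Icc (a := (0:ℝ)) (b := t₂)).exists_bound_of_continuousOn
    (hcontOn t₂ ht₂0)
  set R : ℝ := max M a with hR_def
  have hRa : a ≤ R := le_max_right _ _
  have hR0 : 0 ≤ R := le_trans (le_of_lt ha) hRa
  have hls : ∀ s ∈ Icc 0 t₂, l s ∈ Icc (-R) R := by
    intro s hs
    have := hM s hs
    rw [Real.norm_eq_abs, abs_le] at this
    constructor
    · linarith [this.1, le_max_left M a]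
    · linarith [this.2, le_max_left M a]
  have hcs : c ∈ Icc (-R) R := by
    rcases hc with rfl | rfl
    · exact ⟨by linarith, hR0⟩
    · exact ⟨by linarith, hRa⟩
  -- Lipschitz constant
  set Creal : ℝ := 2 * |β| * R + 3 * |β₃| * R ^ 2 with hC_def
  have hCnonneg : 0 ≤ Creal := by positivity
  set K : NNReal := ⟨Creal, hCnonneg⟩ with hK_def
  have hlip : LipschitzOnWith K (fun x : ℝ => -β * x^2 - β₃ * x^3) (Icc (-R) R) := by
    apply Convex.lipschitzOnWith_of_nnnorm_hasDerivWithin_le (f' := fun x => -β * (2*x) - β₃ * (3*x^2))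
      (convex_Icc _ _)
    · intro x hx
      exact (((hasDerivAt_pow 2 x).const_mul (-β)).sub
        ((hasDerivAt_pow 3 x).const_mul β₃)).hasDerivWithinAt.congr_deriv (by push_cast; ring)
    · intro x hx
      rw [← NNReal.coe_le_coe]
      simp only [coe_nnnorm, Real.norm_eq_abs, hK_def, NNReal.coe_mk]
      have hx1 : |x| ≤ R := abs_le.mpr ⟨hx.1, hx.2⟩
      have h1 : |(-β) * (2*x) - β₃ * (3*x^2)| ≤ |β| * (2*|x|) + |β₃| * (3*x^2) := by
        calc |(-β) * (2*x) - β₃ * (3*x^2)| ≤ |(-β) * (2*x)| + |β₃ * (3*x^2)| := abs_sub _ _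
        _ = |β| * (2*|x|) + |β₃| * (3*x^2) := by
            rw [abs_mul, abs_mul, abs_neg, abs_mul, abs_mul]
            simp [abs_of_nonneg (sq_nonneg x), abs_of_nonneg, abs_two]
      have h2 : x^2 ≤ R^2 := by nlinarith [abs_nonneg x, sq_abs x]
      have : |β| * (2*|x|) + |β₃| * (3*x^2) ≤ Creal := by
        rw [hC_def]
        nlinarith [abs_nonneg β, abs_nonneg β₃, abs_nonneg x]
      exact le_trans h1 this
  -- uniqueness backwards
  have hEq := ODE_solution_unique_of_mem_Icc_left (v := fun _ x => -β * x^2 - β₃ * x^3)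
    (s := fun _ => Icc (-R) R) (K := K) (f := l) (g := fun _ => c) (a := 0) (b := t₂)
    (fun _ _ => hlip)
    (hcontOn t₂ ht₂0)
    (fun s hs => (hderiv s (le_of_lt hs.1)).hasDerivWithinAt)
    (fun s hs => hls s ⟨le_of_lt hs.1, hs.2⟩)
    (continuousOn_const)
    (fun s _ => by simpa [hceq] using (hasDerivWithinAt_const s (Iic s) c).congr_deriv hceq.symm)
    (fun _ _ => hcs)
    ht₂
  exact hcne (hEq ⟨le_refl 0, ht₂0⟩)

theorem stmt_18 (β β₃ : ℝ) (hβ : 0 < β) (hβ₃ : β₃ < 0) (l : ℝ → ℝ) (l₀ : ℝ)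
    (hl₀ : l₀ ∈ Set.Ioo 0 (-β/β₃)) (hinit : l 0 = l₀)
    (hderiv : ∀ t : ℝ, 0 ≤ t → HasDerivAt l (-β * (l t)^2 - β₃ * (l t)^3) t) :
    (∀ t : ℝ, 0 ≤ t → 0 < l t) ∧ AntitoneOn l (Set.Ici 0) ∧
      (∀ t : ℝ, 0 ≤ t → l t ≤ 1 / (1/l₀ + (β - |β₃| * l₀) * t)) ∧
      Filter.Tendsto (fun t : ℝ => t * l t) Filter.atTop (nhds (1/β)) := by
  obtain ⟨hl₀pos, hl₀lt⟩ := hl₀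
  have h3ne : β₃ ≠ 0 := ne_of_lt hβ₃
  have hmem := stmt18_mem β β₃ hβ hβ₃ l l₀ ⟨hl₀pos, hl₀lt⟩ hinit hderiv
  have hpos : ∀ t, 0 ≤ t → 0 < l t := fun t ht => (hmem t ht).1
  have hlt : ∀ t, 0 ≤ t → l t < -β/β₃ := fun t ht => (hmem t ht).2
  have hβ₃a : β₃ * (-β/β₃) = -β := by field_simp
  have hfac : ∀ t, 0 ≤ t → 0 < β + β₃ * l t := by
    intro t ht
    have h1 : β₃ * (-β/β₃) < β₃ * l t := mul_lt_mul_of_neg_left (hlt t ht) hβ₃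
    rw [hβ₃a] at h1; linarith
  have hcont : ContinuousOn l (Ici 0) := fun s hs =>
    ((hderiv s hs).continuousAt).continuousWithinAt
  -- antitone
  have hanti : AntitoneOn l (Ici 0) := by
    apply antitoneOn_of_deriv_nonpos (convex_Ici 0) hcont
    · intro x hx
      rw [interior_Ici] at hx
      exact ((hderiv x (le_of_lt hx)).differentiableAt).differentiableWithinAt
    · intro x hx
      rw [interior_Ici] at hx
      have hx0 : 0 ≤ x := le_of_lt hx
      rw [(hderiv x hx0).deriv]
      nlinarith [mul_pos (mul_pos (hpos x hx0) (hpos x hx0)) (hfac x hx0)]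
  set c : ℝ := β + β₃ * l₀ with hc_def
  have hc : 0 < c := by
    have := hfac 0 le_rfl
    rw [hinit] at this
    exact this
  have habs : β - |β₃| * l₀ = c := by rw [abs_of_neg hβ₃, hc_def]; ring
  set g : ℝ → ℝ := fun t => (l t)⁻¹ with hg_def
  have hgd : ∀ t, 0 ≤ t → HasDerivAt g (β + β₃ * l t) t := by
    intro t ht
    have hne : l t ≠ 0 := ne_of_gt (hpos t ht)
    have h := (hderiv t ht).inv hne
    refine HasDerivAt.congr_deriv h ?_
    rw [div_eq_iff (pow_ne_zero 2 hne)]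
    ring
  -- lower bound on g
  have hφmono : MonotoneOn (fun t => g t - c * t) (Ici 0) := by
    apply monotoneOn_of_deriv_nonneg (convex_Ici 0)
    · exact fun s hs =>
        (((hgd s hs).sub ((hasDerivAt_id s).const_mul c)).continuousAt).continuousWithinAt
    · intro x hx
      rw [interior_Ici] at hx
      exact (((hgd x hx.le).sub
        ((hasDerivAt_id x).const_mul c)).differentiableAt).differentiableWithinAt
    · intro x hx
      rw [interior_Ici] at hx
      have hx0 : 0 ≤ x := le_of_lt hx
      have hct : HasDerivAt (fun t : ℝ => c * t) c x := by
        simpa using (hasDerivAt_id x).const_mul c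
      have hD : HasDerivAt (fun t => g t - c * t) ((β + β₃ * l x) - c) x :=
        (hgd x hx0).sub hct
      rw [hD.deriv]
      have hle : l x ≤ l₀ := by
        rw [← hinit]
        exact hanti self_mem_Ici hx0 hx0
      have := mul_le_mul_of_nonpos_left hle (le_of_lt hβ₃)
      rw [hc_def]
      linarith
  have hgbound : ∀ t, 0 ≤ t → 1/l₀ + c * t ≤ g t := by
    intro t ht
    have h1 : g 0 - c * 0 ≤ g t - c * t := hφmono self_mem_Ici ht ht
    have hg0 : g 0 = 1/l₀ := by rw [hg_def]; simp [hinit, one_div]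
    rw [hg0] at h1
    linarith
  have hDpos : ∀ t : ℝ, 0 ≤ t → 0 < 1/l₀ + c * t := by
    intro t ht
    have h1 : 0 < 1/l₀ := by positivity
    have h2 : 0 ≤ c * t := mul_nonneg hc.le ht
    exact add_pos_of_pos_of_nonneg h1 h2
  have hbound : ∀ t, 0 ≤ t → l t ≤ 1/(1/l₀ + (β - |β₃| * l₀) * t) := by
    intro t ht
    rw [habs]
    have h2 : 1/(g t) ≤ 1/(1/l₀ + c*t) := one_div_le_one_div_of_le (hDpos t ht) (hgbound t ht)
    have h3 : 1/(g t) = l t := by rw [hg_def]; simp [one_div, inv_inv]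
    linarith
  refine ⟨hpos, hanti, hbound, ?_⟩
  -- l tends to 0
  have hl0 : Tendsto l atTop (nhds 0) := by
    have hR : Tendsto (fun t : ℝ => 1/(1/l₀ + c * t)) atTop (nhds 0) := by
      simp only [one_div]
      exact tendsto_inv_atTop_zero.comp
        (tendsto_atTop_add_const_left _ _ (Tendsto.const_mul_atTop hc tendsto_id))
    apply squeeze_zero' ?_ ?_ hR
    · filter_upwards [eventually_ge_atTop (0:ℝ)] with t ht
      exact (hpos t ht).le
    · filter_upwards [eventually_ge_atTop (0:ℝ)] with t ht
      have := hbound t ht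
      rwa [habs] at this
  -- g t / t tends to β
  have hA : Tendsto (fun t => g t / t) atTop (nhds β) := by
    rw [Metric.tendsto_atTop]
    intro ε hε
    have h1 : Tendsto (fun t => β₃ * l t) atTop (nhds 0) := by
      simpa using hl0.const_mul β₃
    have h2 : ∀ᶠ t in atTop, |β₃ * l t| ≤ ε/2 := by
      have := Metric.tendsto_nhds.mp h1 (ε/2) (by linarith)
      filter_upwards [this] with t ht
      rw [Real.dist_eq, sub_zero] at ht
      exact ht.le
    obtain ⟨T, hT⟩ := eventually_atTop.mp (h2.and (eventually_ge_atTop 0))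
    have hT0 : 0 ≤ T := (hT T le_rfl).2
    set K : ℝ := |g T - β * T| with hK_def
    have key : ∀ t, T ≤ t → |(g t - β * t) - (g T - β * T)| ≤ ε/2 * (t - T) := by
      intro t ht
      have hmvt := norm_image_sub_le_of_norm_deriv_le_segment'
        (f := fun s => g s - β * s) (f' := fun s => β₃ * l s) (a := T) (b := t)
        (fun x hx => (((hgd x (le_trans hT0 hx.1)).sub
          ((hasDerivAt_id x).const_mul β)).congr_deriv (by ring)).hasDerivWithinAt)
        (fun x hx => by
          rw [Real.norm_eq_abs]
          exact (hT x hx.1).1)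
        t (right_mem_Icc.mpr ht)
      rw [Real.norm_eq_abs] at hmvt
      exact hmvt
    refine ⟨max (T+1) (2*K/ε + T + 1), fun n hn => ?_⟩
    have hn1 : T + 1 ≤ n := le_trans (le_max_left _ _) hn
    have hn2 : 2*K/ε + T + 1 ≤ n := le_trans (le_max_right _ _) hn
    have hnpos : 0 < n := by linarith
    have hexp : ε/2 * (2*K/ε + T + 1) = K + ε/2*T + ε/2 := by
      field_simp
    have hKn : K ≤ ε/2 * n - ε/2 * T - ε/2 := by
      have h := mul_le_mul_of_nonneg_left hn2 (le_of_lt (half_pos hε))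
      rw [hexp] at h
      linarith
    have hmvt := key n (by linarith)
    have h3 := abs_add_le (g T - β*T) ((g n - β*n) - (g T - β*T))
    have h4 : (g T - β*T) + ((g n - β*n) - (g T - β*T)) = g n - β*n := by ring
    rw [h4] at h3
    have htri : |g n - β*n| ≤ K + ε/2*(n-T) := by
      rw [hK_def]
      linarith
    rw [Real.dist_eq]
    have h5 : g n / n - β = (g n - β * n)/n := by field_simp
    rw [h5, abs_div, abs_of_pos hnpos, div_lt_iff₀ hnpos]
    nlinarith [htri, hKn, half_pos hε, hT0]
  -- conclude
  have hβne : β ≠ 0 := ne_of_gt hβ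
  have hB := hA.inv₀ hβne
  rw [one_div]
  apply hB.congr'
  filter_upwards [eventually_gt_atTop (0:ℝ)] with t ht
  have hlne : l t ≠ 0 := ne_of_gt (hpos t ht.le)
  rw [inv_div, hg_def]
  simp only []
  field_simp
end
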